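/- For every σ > 0 and every integer d ≥ 1, the Fourier sampling identity (1/d)·Σ_{j=0}^{d−1} 1/(1 + 2σ(1 − cos(2πj/d))) = Σ_{ℓ ∈ ℤ} ω^{|ℓ|·d} / √(4σ+1) holds, where the right-hand side is an absolutely convergent bilateral series. -/

import Mathlib

open Complex Finset

-- roots of unity sum
lemma rootSum (d : ℕ) (hd : 1 ≤ d) (k : ℕ) :
    ∑ j : Fin d, (Complex.exp ((2 * Real.pi / d : ℝ) * Complex.I)) ^ (k * (j : ℕ))
      = if d ∣ k then (d : ℂ) else 0 := by
  have hd0 : (d : ℝ) ≠ 0 := by positivity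
  have hwk : (Complex.exp ((2 * Real.pi / d : ℝ) * Complex.I)) ^ k
      = Complex.exp ((2 * Real.pi * k / d : ℝ) * Complex.I) := by
    rw [← Complex.exp_nat_mul]
    congr 1
    push_cast
    ring
  set r : ℂ := Complex.exp ((2 * Real.pi * k / d : ℝ) * Complex.I) with hr
  have hsum : ∑ j : Fin d, (Complex.exp ((2 * Real.pi / d : ℝ) * Complex.I)) ^ (k * (j : ℕ))
      = ∑ j ∈ Finset.range d, r ^ j := by
    rw [← Fin.sum_univ_eq_sum_range (fun j => r ^ j) d]
    refine Finset.sum_congr rfl fun j _ => ?_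
    rw [pow_mul, hwk]
  rw [hsum]
  by_cases hk : d ∣ k
  · obtain ⟨m, rfl⟩ := hk
    have hr1 : r = 1 := by
      rw [hr, Complex.exp_eq_one_iff]
      refine ⟨m, ?_⟩
      have hd0c : (d : ℂ) ≠ 0 := by exact_mod_cast hd0
      push_cast
      field_simp
    simp [hr1]
  · have hrd : r ^ d = 1 := by
      rw [hr, ← Complex.exp_nat_mul, Complex.exp_eq_one_iff]
      refine ⟨k, ?_⟩
      have hd0c : (d : ℂ) ≠ 0 := by exact_mod_cast hd0
      push_cast
      field_simp
    have hr1 : r ≠ 1 := by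
      intro h
      rw [hr, Complex.exp_eq_one_iff] at h
      obtain ⟨n, hn⟩ := h
      have hI : ((2 * Real.pi * k / d : ℝ) : ℂ) = (n : ℂ) * (2 * Real.pi) := by
        have := mul_right_cancel₀ Complex.I_ne_zero (by rw [hn]; push_cast; ring :
          ((2 * Real.pi * k / d : ℝ) : ℂ) * Complex.I = ((n : ℂ) * (2 * Real.pi)) * Complex.I)
        exact this
      have hR : (2 * Real.pi * k / d : ℝ) = (n : ℝ) * (2 * Real.pi) := by
        exact_mod_cast hI
      have hkd : (k : ℝ) = n * d := by
        field_simp at hR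
        nlinarith [Real.pi_pos, hR]
      have hz : (k : ℤ) = n * d := by exact_mod_cast hkd
      have : (d : ℤ) ∣ (k : ℤ) := ⟨n, by linarith⟩
      exact hk (Int.natCast_dvd_natCast.mp this)
    rw [geom_sum_eq hr1, hrd]
    simp [hk]

lemma perTerm (σ ω s : ℝ) (hσ : 0 < σ) (hω0 : 0 < ω) (hω1 : ω < 1)
    (hquad : σ * ω ^ 2 + σ = (2 * σ + 1) * ω) (hωs : σ * (1 - ω ^ 2) = ω * s)
    (θ : ℝ) :
    ((1 + 2 * σ * (1 - Real.cos θ) : ℝ) : ℂ)⁻¹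
      = (s : ℂ)⁻¹ * ((1 - ω * Complex.exp (θ * Complex.I))⁻¹
          + (1 - ω * (starRingEnd ℂ) (Complex.exp (θ * Complex.I)))⁻¹ - 1) := by
  have h1 : (0:ℝ) < 1 - ω ^ 2 := by nlinarith
  have h2 : (0:ℝ) < ω * s := by rw [← hωs]; positivity
  have hs0 : 0 < s := by nlinarith
  set z : ℂ := Complex.exp (θ * Complex.I) with hzdef
  set u : ℂ := (starRingEnd ℂ) z with hudef
  have habs : ‖z‖ = 1 := Complex.norm_exp_ofReal_mul_I θ
  have hz1 : z * u = 1 := by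
    rw [hudef, Complex.mul_conj, Complex.normSq_eq_norm_sq, habs]; norm_num
  have hre : z.re = Real.cos θ := Complex.exp_ofReal_mul_I_re θ
  have hz2 : z + u = 2 * Complex.cos (θ : ℂ) := by
    rw [hudef, Complex.add_conj, hre]
    push_cast
    ring
  have hne1 : (1 : ℂ) - ω * z ≠ 0 := by
    intro h
    have h1 : (ω : ℂ) * z = 1 := by linear_combination -h
    have : ‖(ω : ℂ) * z‖ = 1 := by rw [h1]; simp
    rw [norm_mul, habs, Complex.norm_real, Real.norm_eq_abs, abs_of_pos hω0] at this
    simp at this; linarith [this]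
  have hne2 : (1 : ℂ) - ω * u ≠ 0 := by
    intro h
    have h1 : (ω : ℂ) * u = 1 := by linear_combination -h
    have : ‖(ω : ℂ) * u‖ = 1 := by rw [h1]; simp
    rw [norm_mul, hudef, Complex.norm_conj, habs, Complex.norm_real, Real.norm_eq_abs, abs_of_pos hω0] at this
    simp at this; linarith [this]
  have hσc : (σ : ℂ) ≠ 0 := by exact_mod_cast hσ.ne'
  have hωc : (ω : ℂ) ≠ 0 := by exact_mod_cast hω0.ne'
  have hsc : (s : ℂ) ≠ 0 := by exact_mod_cast hs0.ne'
  have hquadc : (σ : ℂ) * ω ^ 2 + σ = (2 * σ + 1) * ω := by exact_mod_cast hquad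
  have hωsc : (σ : ℂ) * (1 - ω ^ 2) = ω * s := by exact_mod_cast hωs
  have hfac : ((1 + 2 * σ * (1 - Real.cos θ) : ℝ) : ℂ)
      = (σ / ω) * ((1 - ω * z) * (1 - ω * u)) := by
    push_cast
    field_simp
    linear_combination (-(σ:ℂ) * ω ^ 2) * hz1 + ((σ:ℂ) * ω) * hz2 - hquadc
  rw [hfac]
  have hnum : ((1:ℂ) - ω * z)⁻¹ + (1 - ω * u)⁻¹ - 1
      = (1 - (ω:ℂ) ^ 2) / ((1 - ω * z) * (1 - ω * u)) := by
    field_simp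
    linear_combination (-(ω:ℂ) ^ 2) * hz1
  rw [hnum]
  refine inv_eq_of_mul_eq_one_right ?_
  field_simp
  linear_combination hωsc

set_option maxHeartbeats 1000000 in
/-- For every `σ > 0` and every integer `d ≥ 1`, the Fourier sampling identity
`(1/d) ∑_{j=0}^{d-1} 1/(1 + 2σ(1 - cos(2πj/d))) = ∑_{ℓ ∈ ℤ} ω^{|ℓ|d}/√(4σ+1)` holds,
where `ω = (2σ+1-√(4σ+1))/(2σ)` and the bilateral series is absolutely convergent. -/
theorem fourier_sampling_identity (σ : ℝ) (hσ : 0 < σ) (d : ℕ) (hd : 1 ≤ d) :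
    let ω : ℝ := (2 * σ + 1 - Real.sqrt (4 * σ + 1)) / (2 * σ)
    Summable (fun ℓ : ℤ => ω ^ (ℓ.natAbs * d) / Real.sqrt (4 * σ + 1)) ∧
    (1 / d : ℝ) * ∑ j : Fin d, 1 / (1 + 2 * σ * (1 - Real.cos (2 * Real.pi * j.val / d)))
      = ∑' ℓ : ℤ, ω ^ (ℓ.natAbs * d) / Real.sqrt (4 * σ + 1) := by
  intro ω
  set s : ℝ := Real.sqrt (4 * σ + 1) with hsdef
  have hA : (0:ℝ) < 4 * σ + 1 := by linarith
  have hs_sq : s ^ 2 = 4 * σ + 1 := Real.sq_sqrt hA.le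
  have hs0 : 0 < s := Real.sqrt_pos.mpr hA
  have hs1 : 1 < s := by nlinarith
  have hω0 : 0 < ω := by
    have hnum : 0 < 2 * σ + 1 - s := by nlinarith
    exact div_pos hnum (by linarith)
  have hω1 : ω < 1 := by
    rw [div_lt_one (by linarith)]
    linarith
  have hquad : σ * ω ^ 2 + σ = (2 * σ + 1) * ω := by
    show σ * ((2 * σ + 1 - s) / (2 * σ)) ^ 2 + σ = (2 * σ + 1) * ((2 * σ + 1 - s) / (2 * σ))
    field_simp
    nlinarith [hs_sq]
  have hωs : σ * (1 - ω ^ 2) = ω * s := by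
    show σ * (1 - ((2 * σ + 1 - s) / (2 * σ)) ^ 2) = ((2 * σ + 1 - s) / (2 * σ)) * s
    field_simp
    nlinarith [hs_sq]
  set p : ℝ := ω ^ d with hpdef
  have hp0 : 0 < p := pow_pos hω0 d
  have hp1 : p < 1 := pow_lt_one₀ hω0.le hω1 (by omega)
  have h1p : (0:ℝ) < 1 - p := by linarith
  -- summability
  have hsum_nat : Summable (fun n : ℕ => ω ^ (n * d) / s) := by
    have h := (summable_geometric_of_lt_one hp0.le hp1).div_const s
    simpa [hpdef, ← pow_mul, mul_comm d] using h
  have hsummable : Summable (fun ℓ : ℤ => ω ^ (ℓ.natAbs * d) / s) := by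
    refine Summable.of_nat_of_neg ?_ ?_ <;> simpa using hsum_nat
  -- tsum value
  have htsum_nat : ∑' n : ℕ, ω ^ (n * d) / s = (1 - p)⁻¹ / s := by
    have e : ∀ n : ℕ, ω ^ (n * d) / s = p ^ n / s := fun n => by
      rw [hpdef, ← pow_mul, mul_comm]
    rw [tsum_congr e, tsum_div_const, tsum_geometric_of_lt_one hp0.le hp1]
  have htsum : ∑' ℓ : ℤ, ω ^ (ℓ.natAbs * d) / s = (1 + p) / ((1 - p) * s) := by
    rw [Summable.tsum_of_nat_of_neg (by simpa using hsum_nat) (by simpa using hsum_nat)]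
    have e1 : ∑' n : ℕ, ω ^ ((n : ℤ).natAbs * d) / s = (1 - p)⁻¹ / s := by
      simpa using htsum_nat
    have e2 : ∑' n : ℕ, ω ^ ((-(n : ℤ)).natAbs * d) / s = (1 - p)⁻¹ / s := by
      simpa using htsum_nat
    rw [e1, e2]
    simp only [Int.natAbs_zero, zero_mul, pow_zero]
    field_simp
    ring
  refine ⟨hsummable, ?_⟩
  rw [htsum]
  -- complex computation of the finite sum
  have hd0 : (0:ℝ) < d := by exact_mod_cast Nat.pos_of_ne_zero (by omega)
  have hdC : (d:ℂ) ≠ 0 := by exact_mod_cast hd0.ne'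
  set z : Fin d → ℂ := fun j => Complex.exp ((2 * Real.pi * (j:ℕ) / d : ℝ) * Complex.I)
    with hzdef
  set w : ℂ := Complex.exp ((2 * Real.pi / d : ℝ) * Complex.I) with hwdef
  have hzw : ∀ j : Fin d, z j = w ^ (j : ℕ) := by
    intro j
    rw [hzdef, hwdef, ← Complex.exp_nat_mul,
      show ((j:ℕ) : ℂ) * (((2 * Real.pi / d : ℝ) : ℂ) * Complex.I)
          = ((2 * Real.pi * (j:ℕ) / d : ℝ) : ℂ) * Complex.I by push_cast; ring]
  have habs : ∀ j : Fin d, ‖z j‖ = 1 := fun j =>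
    Complex.norm_exp_ofReal_mul_I _
  have hnorm : ∀ j : Fin d, ‖(ω:ℂ) * z j‖ < 1 := by
    intro j
    rw [norm_mul, habs j, Complex.norm_real, Real.norm_eq_abs, abs_of_pos hω0]
    simpa using hω1
  have hωd_norm : ‖(ω:ℂ) ^ d‖ < 1 := by
    rw [norm_pow, Complex.norm_real, Real.norm_eq_abs, abs_of_pos hω0]
    exact hpdef ▸ hp1
  have h1ωd : ((1:ℂ) - (ω:ℂ) ^ d) ≠ 0 := by
    intro h
    have h2 : ((1 - p : ℝ) : ℂ) = 0 := by push_cast [hpdef]; linear_combination h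
    have h3 : (1 - p : ℝ) = 0 := by exact_mod_cast h2
    linarith
  -- the key geometric sum
  set S : ℂ := ∑ j : Fin d, (1 - (ω:ℂ) * z j)⁻¹ with hSdef
  have hSgeo : S = ∑' k : ℕ, ∑ j : Fin d, ((ω:ℂ) * z j) ^ k := by
    rw [hSdef, Summable.tsum_finsetSum (fun j _ => summable_geometric_of_norm_lt_one (hnorm j))]
    exact Finset.sum_congr rfl fun j _ => (tsum_geometric_of_norm_lt_one (hnorm j)).symm
  have hinner : ∀ k : ℕ, ∑ j : Fin d, ((ω:ℂ) * z j) ^ k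
      = (ω:ℂ) ^ k * (if d ∣ k then (d:ℂ) else 0) := by
    intro k
    rw [← rootSum d hd k, Finset.mul_sum]
    refine Finset.sum_congr rfl fun j _ => ?_
    rw [mul_pow, hzw j, ← pow_mul, mul_comm (j:ℕ) k]
  set g : ℕ → ℂ := fun k => (ω:ℂ) ^ k * (if d ∣ k then (d:ℂ) else 0) with hgdef
  have hg : ∑' k : ℕ, g k = ∑' ℓ : ℕ, g (ℓ * d) := by
    symm
    apply Function.Injective.tsum_eq (g := fun ℓ : ℕ => ℓ * d)
    · intro a b h
      exact Nat.eq_of_mul_eq_mul_right (by omega) h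
    · intro x hx
      have hx' : g x ≠ 0 := hx
      have hdvd : d ∣ x := by
        by_contra h
        exact hx' (by simp [hgdef, h])
      obtain ⟨c, rfl⟩ := hdvd
      exact ⟨c, by ring⟩
  have hgval : ∀ ℓ : ℕ, g (ℓ * d) = (d:ℂ) * ((ω:ℂ) ^ d) ^ ℓ := by
    intro ℓ
    have : d ∣ ℓ * d := dvd_mul_left d ℓ
    simp only [hgdef, if_pos this]
    rw [mul_comm ℓ d, pow_mul]
    ring
  have hS : S = (d:ℂ) * (1 - (ω:ℂ) ^ d)⁻¹ := by
    rw [hSgeo, tsum_congr hinner, hg, tsum_congr hgval, tsum_mul_left,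
      tsum_geometric_of_norm_lt_one hωd_norm]
  have hSreal : S = ((d / (1 - p) : ℝ) : ℂ) := by
    rw [hS]
    push_cast [hpdef]
    rw [div_eq_mul_inv]
  have hT : ∑ j : Fin d, (1 - (ω:ℂ) * (starRingEnd ℂ) (z j))⁻¹ = ((d / (1 - p) : ℝ) : ℂ) := by
    have : ∑ j : Fin d, (1 - (ω:ℂ) * (starRingEnd ℂ) (z j))⁻¹ = (starRingEnd ℂ) S := by
      rw [hSdef, map_sum]
      refine Finset.sum_congr rfl fun j _ => ?_
      rw [map_inv₀, map_sub, map_one, map_mul, Complex.conj_ofReal]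
    rw [this, hSreal, Complex.conj_ofReal]
  -- per-term identity and summation
  have hterm : ∀ j : Fin d, ((1 / (1 + 2 * σ * (1 - Real.cos (2 * Real.pi * (j:ℕ) / d))) : ℝ) : ℂ)
      = (s : ℂ)⁻¹ * ((1 - ω * z j)⁻¹ + (1 - ω * (starRingEnd ℂ) (z j))⁻¹ - 1) := by
    intro j
    rw [one_div, Complex.ofReal_inv]
    exact perTerm σ ω s hσ hω0 hω1 hquad hωs (2 * Real.pi * (j:ℕ) / d)
  have hsumC : ((∑ j : Fin d, 1 / (1 + 2 * σ * (1 - Real.cos (2 * Real.pi * (j:ℕ) / d))) : ℝ) : ℂ)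
      = (s : ℂ)⁻¹ * (((d / (1 - p) : ℝ) : ℂ) + ((d / (1 - p) : ℝ) : ℂ) - d) := by
    rw [Complex.ofReal_sum]
    rw [Finset.sum_congr rfl fun j _ => hterm j]
    rw [← Finset.mul_sum]
    congr 1
    rw [Finset.sum_sub_distrib, Finset.sum_add_distrib, ← hSdef, hSreal, hT]
    simp [Finset.card_univ]
  have hL : (∑ j : Fin d, 1 / (1 + 2 * σ * (1 - Real.cos (2 * Real.pi * (j:ℕ) / d))) : ℝ)
      = s⁻¹ * (d / (1 - p) + d / (1 - p) - d) := by
    have := hsumC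
    rw [show ((s : ℂ))⁻¹ * (((d / (1 - p) : ℝ) : ℂ) + ((d / (1 - p) : ℝ) : ℂ) - d)
        = ((s⁻¹ * (d / (1 - p) + d / (1 - p) - d) : ℝ) : ℂ) by push_cast; ring] at this
    exact_mod_cast this
  rw [hL]
  field_simp
  ring
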